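/- For every c > 0 there exists a constant C > 0 (depending only on c) such that the following holds. Let H = (V, 𝓔) be a finite hypergraph on n ≥ 2 vertices that admits a hereditarily c-linear Delaunay graph, and let 0 < α ≤ 1. If at least α·n(n−1)/2 of the unordered pairs of vertices of H are friends, then there exists a hyperedge e ∈ 𝓔 with |e| ≥ α·n/C. -/

import Mathlib

/-- The Delaunay edges of the subhypergraph of `(V, E)` induced on `S`:
pairs `{u, v} ⊆ S` that arise as `e ∩ S` for some hyperedge `e ∈ E`. -/
def delaunayPairs {V : Type} [DecidableEq V] (E : Finset (Finset V)) (S : Finset V) :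
    Set (Finset V) :=
  {p | p.card = 2 ∧ ∃ e ∈ E, e ∩ S = p}

/-- The hypergraph `(V, E)` admits a hereditarily `c`-linear Delaunay graph: for every
(nonempty) subset `S` of the vertices, the Delaunay graph of the induced subhypergraph
has fewer than `c * |S|` edges. -/
def HerLinearDelaunay {V : Type} [DecidableEq V] (c : ℝ) (E : Finset (Finset V)) : Prop :=
  ∀ S : Finset V, S.Nonempty → ((delaunayPairs E S).ncard : ℝ) < c * S.card

/-- The pairs of vertices that are friends: `{u, v}` with `u ≠ v` such that some
hyperedge contains both. -/
def friendPairs {V : Type} [DecidableEq V] (E : Finset (Finset V)) : Set (Finset V) :=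
  {p | p.card = 2 ∧ ∃ e ∈ E, p ⊆ e}

set_option linter.unusedSectionVars false
set_option linter.unreachableTactic false
set_option linter.unusedTactic false
set_option maxHeartbeats 1000000

section AuxFH

open Finset

variable {V : Type} [Fintype V] [DecidableEq V]

lemma aux_sum_pow (p q : ℝ) (U : Finset V) :
    ∑ S ∈ U.powerset, p ^ S.card * q ^ (U \ S).card = (p + q) ^ U.card := by
  calc ∑ S ∈ U.powerset, p ^ S.card * q ^ (U \ S).card
      = ∑ S ∈ U.powerset, (∏ _i ∈ S, p) * ∏ _i ∈ U \ S, q := by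
        simp [Finset.prod_const]
    _ = ∏ _i ∈ U, (p + q) := (Finset.prod_add _ _ _).symm
    _ = (p + q) ^ U.card := Finset.prod_const _

lemma aux_sum_mem (p q : ℝ) (hpq : p + q = 1) (v : V) :
    ∑ S ∈ (Finset.univ : Finset V).powerset,
      (if v ∈ S then p ^ S.card * q ^ ((Finset.univ : Finset V) \ S).card else 0) = p := by
  have hv : v ∉ (Finset.univ : Finset V).erase v := Finset.notMem_erase _ _
  have hins : (Finset.univ : Finset V) = insert v ((Finset.univ : Finset V).erase v) :=
    (Finset.insert_erase (Finset.mem_univ v)).symm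
  rw [hins, Finset.sum_powerset_insert hv]
  have h1 : ∑ t ∈ ((Finset.univ : Finset V).erase v).powerset,
      (if v ∈ t then p ^ t.card * q ^ ((insert v ((Finset.univ : Finset V).erase v)) \ t).card else 0) = 0 := by
    refine Finset.sum_eq_zero fun t ht => ?_
    have : v ∉ t := fun hvt => hv (Finset.mem_powerset.mp ht hvt)
    simp [this]
  rw [h1, zero_add]
  have h2 : ∀ t ∈ ((Finset.univ : Finset V).erase v).powerset,
      (if v ∈ insert v t then p ^ (insert v t).card * q ^ ((insert v ((Finset.univ : Finset V).erase v)) \ insert v t).card else 0)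
      = p * (p ^ t.card * q ^ (((Finset.univ : Finset V).erase v) \ t).card) := by
    intro t ht
    have hvt : v ∉ t := fun hvt => hv (Finset.mem_powerset.mp ht hvt)
    have hcard : (insert v t).card = t.card + 1 := Finset.card_insert_of_notMem hvt
    have hsd : (insert v ((Finset.univ : Finset V).erase v)) \ insert v t
        = ((Finset.univ : Finset V).erase v) \ t := by
      ext x
      by_cases hx : x = v <;> simp [hx, hv, hvt] <;> tauto
    rw [if_pos (Finset.mem_insert_self _ _), hcard, hsd]
    ring
  rw [Finset.sum_congr rfl h2, ← Finset.mul_sum, aux_sum_pow, hpq, one_pow, mul_one]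

lemma aux_sum_card (p q : ℝ) (hpq : p + q = 1) :
    ∑ S ∈ (Finset.univ : Finset V).powerset,
      (p ^ S.card * q ^ ((Finset.univ : Finset V) \ S).card) * S.card
      = p * (Fintype.card V) := by
  have hcard : ∀ S : Finset V, ((S.card : ℝ)) = ∑ v : V, if v ∈ S then (1 : ℝ) else 0 := by
    intro S
    rw [Finset.sum_ite_mem, Finset.univ_inter, Finset.sum_const, nsmul_eq_mul, mul_one]
  calc ∑ S ∈ (Finset.univ : Finset V).powerset,
      (p ^ S.card * q ^ ((Finset.univ : Finset V) \ S).card) * S.card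
      = ∑ S ∈ (Finset.univ : Finset V).powerset, ∑ v : V,
          (if v ∈ S then p ^ S.card * q ^ ((Finset.univ : Finset V) \ S).card else 0) := by
        refine Finset.sum_congr rfl fun S _ => ?_
        rw [hcard S, Finset.mul_sum]
        refine Finset.sum_congr rfl fun v _ => ?_
        by_cases h : v ∈ S <;> simp [h]
    _ = ∑ v : V, ∑ S ∈ (Finset.univ : Finset V).powerset,
          (if v ∈ S then p ^ S.card * q ^ ((Finset.univ : Finset V) \ S).card else 0) :=
        Finset.sum_comm
    _ = ∑ _v : V, p := Finset.sum_congr rfl fun v _ => aux_sum_mem p q hpq v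
    _ = p * (Fintype.card V) := by rw [Finset.sum_const, nsmul_eq_mul, Finset.card_univ]; ring

lemma aux_sum_inter (p q : ℝ) (hpq : p + q = 1) (e A : Finset V) (hA : A ⊆ e) :
    ∑ S ∈ (Finset.univ : Finset V).powerset,
      (if e ∩ S = A then p ^ S.card * q ^ ((Finset.univ : Finset V) \ S).card else 0)
      = p ^ A.card * q ^ (e \ A).card := by
  rw [← Finset.sum_filter]
  have key : ∑ S ∈ (Finset.univ : Finset V).powerset.filter (fun S => e ∩ S = A),
      p ^ S.card * q ^ ((Finset.univ : Finset V) \ S).card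
      = ∑ T ∈ ((Finset.univ : Finset V) \ e).powerset,
          (p ^ A.card * q ^ (e \ A).card) * (p ^ T.card * q ^ (((Finset.univ : Finset V) \ e) \ T).card) := by
    refine Finset.sum_nbij' (fun S => S \ e) (fun T => A ∪ T) ?_ ?_ ?_ ?_ ?_
    · intro S hS
      rw [Finset.mem_powerset]
      exact Finset.sdiff_subset_sdiff (Finset.subset_univ S) (le_refl e)
    · intro T hT
      have hTe : T ⊆ Finset.univ \ e := Finset.mem_powerset.mp hT
      have hTne : ∀ x ∈ T, x ∉ e := fun x hx => (Finset.mem_sdiff.mp (hTe hx)).2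
      simp only [Finset.mem_filter, Finset.mem_powerset]
      refine ⟨Finset.subset_univ _, ?_⟩
      ext x
      simp only [Finset.mem_inter, Finset.mem_union]
      constructor
      · rintro ⟨hxe, hxA | hxT⟩
        · exact hxA
        · exact absurd hxe (hTne x hxT)
      · intro hxA; exact ⟨hA hxA, Or.inl hxA⟩
    · intro S hS
      have h : e ∩ S = A := (Finset.mem_filter.mp hS).2
      ext x
      simp only [Finset.mem_union, Finset.mem_sdiff, ← h, Finset.mem_inter]
      tauto
    · intro T hT
      have hTe : T ⊆ Finset.univ \ e := Finset.mem_powerset.mp hT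
      have hTne : ∀ x ∈ T, x ∉ e := fun x hx => (Finset.mem_sdiff.mp (hTe hx)).2
      ext x
      simp only [Finset.mem_union, Finset.mem_sdiff]
      constructor
      · rintro ⟨hxA | hxT, hxe⟩
        · exact absurd (hA hxA) hxe
        · exact hxT
      · intro hxT; exact ⟨Or.inr hxT, hTne x hxT⟩
    · intro S hS
      have h : e ∩ S = A := (Finset.mem_filter.mp hS).2
      have hc1 : S.card = A.card + (S \ e).card := by
        rw [← h, Finset.inter_comm e S]
        exact (Finset.card_inter_add_card_sdiff S e).symm
      have hc2 : ((Finset.univ : Finset V) \ S).card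
          = (e \ A).card + (((Finset.univ : Finset V) \ e) \ (S \ e)).card := by
        have h1 : (Finset.univ : Finset V) \ S = (e \ A) ∪ (((Finset.univ : Finset V) \ e) \ (S \ e)) := by
          ext x
          simp only [Finset.mem_union, Finset.mem_sdiff, Finset.mem_univ, true_and, ← h,
            Finset.mem_inter]
          tauto
        have h2 : Disjoint (e \ A) (((Finset.univ : Finset V) \ e) \ (S \ e)) := by
          rw [Finset.disjoint_left]
          intro x hx hx'
          exact (Finset.mem_sdiff.mp (Finset.mem_sdiff.mp hx').1).2 (Finset.mem_sdiff.mp hx).1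
        rw [h1, Finset.card_union_of_disjoint h2]
      rw [hc1, hc2, pow_add, pow_add]
      ring
  rw [key, ← Finset.mul_sum, aux_sum_pow, hpq, one_pow, mul_one]

end AuxFH

/-- Fractional Helly for hypergraphs with a hereditarily linear Delaunay graph:
if at least `α · n(n-1)/2` pairs of vertices are friends, then some hyperedge has
size at least `α · n / C`. -/
theorem fractional_helly_herLinearDelaunay :
    ∀ c : ℝ, 0 < c → ∃ C : ℝ, 0 < C ∧
      ∀ (V : Type) [Fintype V] [DecidableEq V] (E : Finset (Finset V)) (α : ℝ),
        2 ≤ Fintype.card V →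
        HerLinearDelaunay c E →
        0 < α → α ≤ 1 →
        α * (Fintype.card V) * ((Fintype.card V : ℝ) - 1) / 2 ≤ ((friendPairs E).ncard : ℝ) →
        ∃ e ∈ E, α * (Fintype.card V : ℝ) / C ≤ (e.card : ℝ) := by
  intro c hc
  refine ⟨16 * c, by linarith, ?_⟩
  intro V _ _ E α hn hher hα hα1 hfriend
  classical
  set n := Fintype.card V with hn_def
  have hn2 : (2 : ℝ) ≤ n := by exact_mod_cast hn
  -- friend pairs as a Finset
  set Fs : Finset (Finset V) := Finset.univ.filter (fun pr => pr ∈ friendPairs E) with hFs_def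
  have hFcoe : friendPairs E = ↑Fs := by
    ext pr; simp [hFs_def]
  have hFcard : ((friendPairs E).ncard : ℝ) = Fs.card := by
    rw [hFcoe, Set.ncard_coe_finset]
  rw [hFcard] at hfriend
  -- Fs is nonempty
  have hFpos : (0 : ℝ) < Fs.card := by
    have : (0:ℝ) < α * n * ((n:ℝ) - 1) / 2 := by
      apply div_pos _ (by norm_num)
      apply mul_pos (mul_pos hα (by linarith)) (by linarith)
    linarith
  have hFne : Fs.Nonempty := by
    rw [← Finset.card_pos]
    exact_mod_cast hFpos
  -- choice of witness edges
  have hch : ∀ q ∈ Fs, ∃ e, e ∈ E ∧ q ⊆ e := by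
    intro q hq
    have : q ∈ friendPairs E := (Finset.mem_filter.mp hq).2
    obtain ⟨-, e, he, hqe⟩ := this
    exact ⟨e, he, hqe⟩
  choose! f hf1 hf2 using hch
  have hcard2 : ∀ q ∈ Fs, q.card = 2 := fun q hq => (Finset.mem_filter.mp hq).2.1
  -- E nonempty, max edge
  have hEne : E.Nonempty := by
    obtain ⟨q, hq⟩ := hFne
    exact ⟨f q, hf1 q hq⟩
  obtain ⟨e0, he0, hmax⟩ := E.exists_max_image (fun e => e.card) hEne
  set k := e0.card with hk_def
  have hk2 : 2 ≤ k := by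
    obtain ⟨q, hq⟩ := hFne
    calc 2 = q.card := (hcard2 q hq).symm
      _ ≤ (f q).card := Finset.card_le_card (hf2 q hq)
      _ ≤ k := hmax _ (hf1 q hq)
  have hK2 : (2 : ℝ) ≤ (k : ℝ) := by exact_mod_cast hk2
  have hKpos : (0 : ℝ) < (k : ℝ) := by linarith
  -- the sampling probability
  set p : ℝ := 1 / (2 * k) with hp_def
  have hppos : 0 < p := by rw [hp_def]; apply div_pos one_pos; linarith
  have hple : p ≤ 1 / 4 := by
    rw [hp_def]
    rw [div_le_div_iff₀ (by linarith) (by norm_num)]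
    linarith
  set q : ℝ := 1 - p with hq_def
  have hpq : p + q = 1 := by rw [hq_def]; ring
  set w : Finset V → ℝ := fun S => p ^ S.card * q ^ ((Finset.univ : Finset V) \ S).card
    with hw_def
  have hwpos : ∀ S : Finset V, 0 ≤ w S := by
    intro S
    apply mul_nonneg (le_of_lt (pow_pos hppos _))
    apply pow_nonneg; rw [hq_def]; linarith
  -- Delaunay pairs as Finsets
  set Ds : Finset V → Finset (Finset V) :=
    fun S => Finset.univ.filter (fun pr => pr ∈ delaunayPairs E S) with hDs_def
  have hDcard : ∀ S : Finset V, ((delaunayPairs E S).ncard : ℝ) = (Ds S).card := by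
    intro S
    have : delaunayPairs E S = ↑(Ds S) := by ext pr; simp [hDs_def]
    rw [this, Set.ncard_coe_finset]
  have hDle : ∀ S : Finset V, ((Ds S).card : ℝ) ≤ c * S.card := by
    intro S
    rcases S.eq_empty_or_nonempty with rfl | hS
    · have : Ds (∅ : Finset V) = ∅ := by
        ext pr
        simp only [hDs_def, Finset.mem_filter, Finset.mem_univ, true_and, Finset.notMem_empty,
          iff_false]
        rintro ⟨hpr2, e, he, hpr⟩
        rw [Finset.inter_empty] at hpr
        rw [← hpr] at hpr2
        simp at hpr2
      rw [this]
      simp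
    · have := hher S hS
      rw [hDcard S] at this
      linarith
  -- Bernoulli lower bound for each friend pair's weight
  have hbern : ∀ q' ∈ Fs, p ^ 2 * (1 / 2) ≤ p ^ q'.card * q ^ ((f q') \ q').card := by
    intro q' hq'
    rw [hcard2 q' hq']
    have hm : ((f q') \ q').card ≤ k := by
      calc ((f q') \ q').card ≤ (f q').card := Finset.card_le_card (Finset.sdiff_subset)
        _ ≤ k := hmax _ (hf1 q' hq')
    have h1 : (1 : ℝ) / 2 ≤ q ^ ((f q') \ q').card := by
      have hber := one_add_mul_le_pow (a := -p) (by linarith) ((f q') \ q').card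
      have : (1 : ℝ) + (((f q') \ q').card : ℝ) * (-p) = 1 - (((f q') \ q').card : ℝ) * p := by ring
      rw [this] at hber
      have hmR : (((f q') \ q').card : ℝ) ≤ (k : ℝ) := by exact_mod_cast hm
      have hkp : (k : ℝ) * p = 1 / 2 := by
        rw [hp_def]; field_simp
      have : (((f q') \ q').card : ℝ) * p ≤ 1 / 2 := by
        rw [← hkp]
        exact mul_le_mul_of_nonneg_right hmR (le_of_lt hppos)
      have h2 : (1 : ℝ) - (((f q') \ q').card : ℝ) * p ≤ (1 + (-p)) ^ ((f q') \ q').card := hber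
      have h3 : (1 : ℝ) + (-p) = q := by rw [hq_def]; ring
      rw [h3] at h2
      linarith
    have hp2 : (0 : ℝ) ≤ p ^ 2 := sq_nonneg p
    calc p ^ 2 * (1 / 2) ≤ p ^ 2 * (q ^ ((f q') \ q').card) := by
          apply mul_le_mul_of_nonneg_left h1 hp2
      _ = p ^ 2 * q ^ ((f q') \ q').card := rfl
  -- main double counting
  have main : (Fs.card : ℝ) * (p ^ 2 * (1 / 2)) ≤ c * (p * n) := by
    calc (Fs.card : ℝ) * (p ^ 2 * (1 / 2))
        = ∑ _q' ∈ Fs, p ^ 2 * (1 / 2) := by rw [Finset.sum_const, nsmul_eq_mul]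
      _ ≤ ∑ q' ∈ Fs, p ^ q'.card * q ^ ((f q') \ q').card :=
          Finset.sum_le_sum hbern
      _ = ∑ q' ∈ Fs, ∑ S ∈ (Finset.univ : Finset V).powerset,
            (if (f q') ∩ S = q' then w S else 0) := by
          refine Finset.sum_congr rfl fun q' hq' => ?_
          exact (aux_sum_inter p q hpq (f q') q' (hf2 q' hq')).symm
      _ = ∑ S ∈ (Finset.univ : Finset V).powerset, ∑ q' ∈ Fs,
            (if (f q') ∩ S = q' then w S else 0) := Finset.sum_comm
      _ = ∑ S ∈ (Finset.univ : Finset V).powerset,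
            ((Fs.filter (fun q' => (f q') ∩ S = q')).card : ℝ) * w S := by
          refine Finset.sum_congr rfl fun S _ => ?_
          rw [← Finset.sum_filter, Finset.sum_const, nsmul_eq_mul]
      _ ≤ ∑ S ∈ (Finset.univ : Finset V).powerset, ((Ds S).card : ℝ) * w S := by
          refine Finset.sum_le_sum fun S _ => ?_
          apply mul_le_mul_of_nonneg_right _ (hwpos S)
          have hsub : Fs.filter (fun q' => (f q') ∩ S = q') ⊆ Ds S := by
            intro q' hq'
            obtain ⟨hq'F, hq'S⟩ := Finset.mem_filter.mp hq'
            simp only [hDs_def, Finset.mem_filter, Finset.mem_univ, true_and]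
            exact ⟨hcard2 q' hq'F, f q', hf1 q' hq'F, hq'S⟩
          exact_mod_cast Finset.card_le_card hsub
      _ ≤ ∑ S ∈ (Finset.univ : Finset V).powerset, (c * S.card) * w S := by
          refine Finset.sum_le_sum fun S _ => ?_
          exact mul_le_mul_of_nonneg_right (hDle S) (hwpos S)
      _ = c * ∑ S ∈ (Finset.univ : Finset V).powerset, w S * S.card := by
          rw [Finset.mul_sum]
          refine Finset.sum_congr rfl fun S _ => ?_
          ring
      _ = c * (p * n) := by rw [aux_sum_card p q hpq]
  -- conclude
  refine ⟨e0, he0, ?_⟩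
  rw [div_le_iff₀ (by linarith : (0:ℝ) < 16 * c)]
  -- from main, with p = 1/(2k): Fs.card ≤ 4 c n k
  have hmain2 : (Fs.card : ℝ) ≤ 4 * c * n * k := by
    have h1 : (Fs.card : ℝ) * (p ^ 2 * (1/2)) ≤ c * (p * n) := main
    rw [hp_def] at h1
    clear_value Ds w q p k
    have hk0 : ((k:ℝ)) ≠ 0 := by positivity
    have h3 := mul_le_mul_of_nonneg_right h1 (show (0:ℝ) ≤ 8 * (k:ℝ)^2 by positivity)
    calc (Fs.card:ℝ) = (Fs.card:ℝ) * ((1/(2*(k:ℝ)))^2 * (1/2)) * (8*(k:ℝ)^2) := by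
          have h : ((1/(2*(k:ℝ)))^2 * (1/2)) * (8*(k:ℝ)^2) = 1 := by field_simp; ring
          rw [mul_assoc, h, mul_one]
      _ ≤ c * (1/(2*(k:ℝ)) * n) * (8*(k:ℝ)^2) := h3
      _ = 4 * c * n * k := by field_simp; ring
  have hnpos : (0:ℝ) < n := by linarith
  nlinarith [hfriend, hmain2, mul_pos hα hnpos, hnpos]
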